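/- For a finite multiset P of intervals in {1,…,n} and for each pair i ≤ j, let d_{ij}(P) be the number of intervals of P contained in [i, j]. If P' is obtained from P by a single nontrivial fusion of two overlapping intervals A and B, then d_{ij}(P') ≥ d_{ij}(P) for all i ≤ j, and strict inequality holds for at least one pair (i, j). -/
import Mathlib


/-- `Q` is obtained from `P` by a single (nontrivial) fusion: two overlapping loops
`A, B` (with `A.1 < B.1 ≤ A.2 < B.2`, so neither contains the other and they meet)
are replaced by their union `(A.1, B.2)` and intersection `(B.1, A.2)`. -/
def IsFusion (P Q : Multiset (ℕ × ℕ)) : Prop :=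
  ∃ A B : ℕ × ℕ, A.1 < B.1 ∧ B.1 ≤ A.2 ∧ A.2 < B.2 ∧
    A ∈ P ∧ B ∈ P.erase A ∧
    Q = (A.1, B.2) ::ₘ (B.1, A.2) ::ₘ ((P.erase A).erase B)

/-- `d i j P` is the number of intervals of `P` contained in `[i, j]`
(one-point zero loops included). -/
def dCount (i j : ℕ) (P : Multiset (ℕ × ℕ)) : ℕ :=
  Multiset.card (P.filter fun L => i ≤ L.1 ∧ L.2 ≤ j)

def dCountIte (i j : ℕ) (L : ℕ × ℕ) : ℕ := if i ≤ L.1 ∧ L.2 ≤ j then 1 else 0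

lemma dCount_cons (i j : ℕ) (L : ℕ × ℕ) (s : Multiset (ℕ × ℕ)) :
    dCount i j (L ::ₘ s) = dCountIte i j L + dCount i j s := by
  simp only [dCount, dCountIte, Multiset.filter_cons]
  split_ifs with h <;> simp <;> omega

lemma dCountIte_le (i j a1 a2 b1 b2 : ℕ) (hab1 : a1 ≤ b1) (hab2 : a2 ≤ b2) :
    dCountIte i j (a1, a2) + dCountIte i j (b1, b2)
      ≤ dCountIte i j (a1, b2) + dCountIte i j (b1, a2) := by
  simp only [dCountIte]
  split_ifs <;> omega

/-- A single nontrivial fusion weakly increases every statistic `d_{ij}` and strictly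
increases at least one of them. -/
theorem stmt_2 (n : ℕ) (P Q : Multiset (ℕ × ℕ))
    (hP : ∀ L ∈ P, 1 ≤ L.1 ∧ L.1 ≤ L.2 ∧ L.2 ≤ n)
    (hPQ : IsFusion P Q) :
    (∀ i j : ℕ, i ≤ j → dCount i j P ≤ dCount i j Q) ∧
    (∃ i j : ℕ, i ≤ j ∧ dCount i j P < dCount i j Q) := by
  obtain ⟨A, B, h1, h2, h3, hA, hB, hQ⟩ := hPQ
  set R := (P.erase A).erase B with hR
  have hP' : P = A ::ₘ B ::ₘ R := by
    rw [hR, Multiset.cons_erase hB, Multiset.cons_erase hA]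
  constructor
  · intro i j _
    rw [hP', hQ, dCount_cons, dCount_cons, dCount_cons, dCount_cons]
    have hAB := dCountIte_le i j A.1 A.2 B.1 B.2 (le_of_lt h1) (le_of_lt h3)
    simp only [Prod.mk.eta] at hAB
    omega
  · refine ⟨B.1, A.2, h2, ?_⟩
    rw [hP', hQ, dCount_cons, dCount_cons, dCount_cons, dCount_cons]
    have eA : dCountIte B.1 A.2 A = 0 := by
      simp only [dCountIte]; rw [if_neg]; omega
    have eB : dCountIte B.1 A.2 B = 0 := by
      simp only [dCountIte]; rw [if_neg]; omega
    have eU : dCountIte B.1 A.2 (B.1, A.2) = 1 := by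
      simp only [dCountIte]; rw [if_pos]; exact ⟨le_refl _, le_refl _⟩
    omega
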